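/- Let R be a commutative ring of characteristic p. The kernel of the ghost-component-zero projection W(R)/p → R (induced by W(R) → R, the first coordinate) is a square-zero ideal of W(R)/p. -/
import Mathlib

/-- Let `R` be a commutative ring of characteristic `p`.  The kernel of the projection
`W(R)/p → R` (induced by the zeroth-coordinate map `W(R) → R`) is a square-zero ideal of
`W(R)/p`: if `x, y ∈ W(R)` have vanishing zeroth coordinate, then `x·y ∈ p·W(R)`. -/
theorem stmt4 (p : ℕ) [Fact p.Prime] (R : Type*) [CommRing R] [CharP R p]
    (x y : WittVector p R) (hx : x.coeff 0 = 0) (hy : y.coeff 0 = 0) :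
    ∃ z : WittVector p R, x * y = (p : WittVector p R) * z := by
  set a := x.shift 1
  set b := y.shift 1
  have hxa : x = WittVector.verschiebung a := by
    have := WittVector.eq_iterate_verschiebung (x := x) (n := 1) (by
      intro i hi; interval_cases i; exact hx)
    simpa using this
  have hyb : y = WittVector.verschiebung b := by
    have := WittVector.eq_iterate_verschiebung (x := y) (n := 1) (by
      intro i hi; interval_cases i; exact hy)
    simpa using this
  refine ⟨WittVector.verschiebung (a * b), ?_⟩
  rw [hxa, hyb]
  calc WittVector.verschiebung a * WittVector.verschiebung b
      = WittVector.verschiebung (b * WittVector.frobenius (WittVector.verschiebung a)) := by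
        rw [WittVector.verschiebung_mul_frobenius]; ring
    _ = WittVector.verschiebung (b * (a * (p : WittVector p R))) := by rw [WittVector.frobenius_verschiebung]
    _ = (p : WittVector p R) * WittVector.verschiebung (a * b) := by
        have : b * (a * (p : WittVector p R)) = p • (a * b) := by simp [nsmul_eq_mul]; ring
        rw [this, map_nsmul, nsmul_eq_mul]
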